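/- Assume: (i) there is a constant C > 0 such that for all n ≥ 1 and all x, y ∈ ℤ, E_μ( |N_n(x) − N_n(y)|² ) ≤ C·n^{1/2}·|x − y|; (ii) there is a constant C > 0 such that μ(S_u = 0) ≤ C·u^{−1/2} for every integer u ≥ 1; and (iii) there is a constant C > 0 such that E_μ(S_n²) ≤ C·n for every n ≥ 1. Then for every l ∈ ℤ, E_μ( | ∑_{x ∈ ℤ} ( N_n(x)² − N_n(x)·N_n(x+l) ) | ) = o(n^{3/2}) as n → ∞, i.e. n^{−3/2}·E_μ( | ∑_{x ∈ ℤ} ( N_n(x)² − N_n(x)·N_n(x+l) ) | ) → 0. -/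

import Mathlib

open MeasureTheory Filter
open scoped ENNReal

set_option linter.unusedSectionVars false
set_option linter.unusedVariables false
set_option linter.deprecated false
set_option maxHeartbeats 1000000

/-- Birkhoff sums `S_n = ∑_{k=0}^{n-1} φ ∘ T^k`. -/
def birkS {Ω : Type*} (T : Ω → Ω) (φ : Ω → ℤ) (n : ℕ) (ω : Ω) : ℤ :=
  ∑ k ∈ Finset.range n, φ (T^[k] ω)

/-- Local time `N_n(x) = ∑_{i=0}^{n-1} 1_{S_i = x}`. -/
def locN {Ω : Type*} (T : Ω → Ω) (φ : Ω → ℤ) (n : ℕ) (x : ℤ) (ω : Ω) : ℕ :=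
  ∑ i ∈ Finset.range n, if birkS T φ i ω = x then 1 else 0

section Aux

variable {Ω : Type*} [MeasurableSpace Ω] (T : Ω → Ω) (φ : Ω → ℤ)

lemma birkS_zero (ω : Ω) : birkS T φ 0 ω = 0 := by simp [birkS]

lemma birkS_meas (hT : Measurable T) (hφ : Measurable φ) (n : ℕ) :
    Measurable (birkS T φ n) :=
  Finset.measurable_sum _ fun k _ => hφ.comp (hT.iterate k)

lemma locN_le (n : ℕ) (x : ℤ) (ω : Ω) : locN T φ n x ω ≤ n := by
  unfold locN
  calc ∑ i ∈ Finset.range n, (if birkS T φ i ω = x then 1 else 0)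
      ≤ ∑ _i ∈ Finset.range n, 1 := Finset.sum_le_sum (by intros; split <;> simp)
    _ = n := by simp

lemma locN_eq_zero (n : ℕ) (x : ℤ) (ω : Ω)
    (h : x ∉ (Finset.range n).image fun i => birkS T φ i ω) : locN T φ n x ω = 0 := by
  unfold locN
  refine Finset.sum_eq_zero fun i hi => ?_
  rw [if_neg]
  exact fun he => h (Finset.mem_image.2 ⟨i, hi, he⟩)

lemma locN_meas (hT : Measurable T) (hφ : Measurable φ) (n : ℕ) (x : ℤ) :
    Measurable fun ω => (locN T φ n x ω : ℝ) := by
  have h1 : Measurable fun ω => locN T φ n x ω := by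
    unfold locN
    refine Finset.measurable_sum _ fun i _ => Measurable.ite ?_ measurable_const
      measurable_const
    exact (birkS_meas T φ hT hφ i) (measurableSet_singleton x)
  exact measurable_from_top.comp h1

/-- The pointwise algebraic identity. -/
lemma key_pointwise (n : ℕ) (l : ℤ) (ω : Ω) :
    ∑' x : ℤ, ((locN T φ n x ω : ℝ) ^ 2
        - (locN T φ n x ω : ℝ) * (locN T φ n (x + l) ω : ℝ))
      = (1 / 2) * ∑' x : ℤ, ((locN T φ n x ω : ℝ) - (locN T φ n (x + l) ω : ℝ)) ^ 2 := by
  set N : ℤ → ℝ := fun x => (locN T φ n x ω : ℝ) with hN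
  set F : Finset ℤ := (Finset.range n).image fun i => birkS T φ i ω with hF
  set G : Finset ℤ := F ∪ F.image (fun y => y - l) with hG
  have hzero : ∀ x ∉ G, N x = 0 ∧ N (x + l) = 0 := by
    intro x hx
    constructor
    · have : x ∉ F := fun h => hx (Finset.mem_union_left _ h)
      simp [hN, locN_eq_zero T φ n x ω this]
    · have : x + l ∉ F := by
        intro h
        exact hx (Finset.mem_union_right _ (Finset.mem_image.2 ⟨x + l, h, by ring⟩))
      simp [hN, locN_eq_zero T φ n (x + l) ω this]
  have h1 : Summable fun x => N x ^ 2 :=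
    summable_of_ne_finset_zero (s := G) fun x hx => by rw [(hzero x hx).1]; ring
  have h2 : Summable fun x => N x * N (x + l) :=
    summable_of_ne_finset_zero (s := G) fun x hx => by rw [(hzero x hx).1]; ring
  have h3 : Summable fun x => N (x + l) ^ 2 :=
    summable_of_ne_finset_zero (s := G) fun x hx => by rw [(hzero x hx).2]; ring
  have h31 : ∑' x, N (x + l) ^ 2 = ∑' x, N x ^ 2 := by
    simpa using (Equiv.addRight l).tsum_eq fun x => N x ^ 2
  have hElhs : ∑' x : ℤ, (N x ^ 2 - N x * N (x + l))
      = (∑' x, N x ^ 2) - ∑' x, N x * N (x + l) := Summable.tsum_sub h1 h2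
  have hfun : (fun x : ℤ => (N x - N (x + l)) ^ 2)
      = fun x => (N x ^ 2 + N (x + l) ^ 2) - 2 * (N x * N (x + l)) := by
    funext x; ring
  have hErhs : ∑' x : ℤ, (N x - N (x + l)) ^ 2
      = ((∑' x, N x ^ 2) + ∑' x, N (x + l) ^ 2) - 2 * ∑' x, N x * N (x + l) := by
    rw [hfun, Summable.tsum_sub (h1.add h3) (h2.mul_left 2), Summable.tsum_add h1 h3, tsum_mul_left]
  rw [hElhs, hErhs, h31]; ring

lemma summable_sq (n : ℕ) (l : ℤ) (ω : Ω) :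
    Summable fun x : ℤ => ((locN T φ n x ω : ℝ) - (locN T φ n (x + l) ω : ℝ)) ^ 2 := by
  set F : Finset ℤ := (Finset.range n).image fun i => birkS T φ i ω with hF
  refine summable_of_ne_finset_zero (s := F ∪ F.image (fun y => y - l)) fun x hx => ?_
  have e1 : locN T φ n x ω = 0 :=
    locN_eq_zero T φ n x ω fun h => hx (Finset.mem_union_left _ h)
  have e2 : locN T φ n (x + l) ω = 0 := by
    refine locN_eq_zero T φ n (x + l) ω fun h => ?_
    exact hx (Finset.mem_union_right _ (Finset.mem_image.2 ⟨x + l, h, by ring⟩))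
  rw [e1, e2]; norm_num

lemma abs_ofReal_eq (n : ℕ) (l : ℤ) (ω : Ω) :
    ENNReal.ofReal |∑' x : ℤ, ((locN T φ n x ω : ℝ) ^ 2
        - (locN T φ n x ω : ℝ) * (locN T φ n (x + l) ω : ℝ))|
      = ENNReal.ofReal (1 / 2) * ∑' x : ℤ,
          ENNReal.ofReal (((locN T φ n x ω : ℝ) - (locN T φ n (x + l) ω : ℝ)) ^ 2) := by
  rw [key_pointwise T φ n l ω, abs_of_nonneg
    (mul_nonneg (by norm_num) (tsum_nonneg fun x => sq_nonneg _)),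
    ENNReal.ofReal_mul (by norm_num),
    ENNReal.ofReal_tsum_of_nonneg (fun x => sq_nonneg _) (summable_sq T φ n l ω)]

end Aux

section Helpers

variable {Ω : Type*} [MeasurableSpace Ω] (T : Ω → Ω) (φ : Ω → ℤ)

lemma sq_meas (hT : Measurable T) (hφ : Measurable φ) (n : ℕ) (l : ℤ) (x : ℤ) :
    Measurable fun ω =>
      ENNReal.ofReal (((locN T φ n x ω : ℝ) - (locN T φ n (x + l) ω : ℝ)) ^ 2) :=
  (((locN_meas T φ hT hφ n x).sub (locN_meas T φ hT hφ n (x + l))).pow_const 2).ennreal_ofReal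

lemma lint_eq (μ : Measure Ω) (hT : Measurable T) (hφ : Measurable φ) (n : ℕ) (l : ℤ) :
    (∫⁻ ω, ENNReal.ofReal |∑' x : ℤ, ((locN T φ n x ω : ℝ) ^ 2
        - (locN T φ n x ω : ℝ) * (locN T φ n (x + l) ω : ℝ))| ∂μ)
      = ENNReal.ofReal (1 / 2) * ∑' x : ℤ,
          ∫⁻ ω, ENNReal.ofReal (((locN T φ n x ω : ℝ) - (locN T φ n (x + l) ω : ℝ)) ^ 2) ∂μ := by
  simp_rw [abs_ofReal_eq T φ n l]
  rw [lintegral_const_mul' _ _ ENNReal.ofReal_ne_top,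
    lintegral_tsum fun x => (sq_meas T φ hT hφ n l x).aemeasurable]

lemma cheb (μ : Measure Ω) [IsProbabilityMeasure μ] (hT : Measurable T) (hφ : Measurable φ)
    (C : ℝ) (hC : 0 < C)
    (hiii : ∀ n : ℕ, 1 ≤ n →
      (∫⁻ ω, ENNReal.ofReal ((birkS T φ n ω : ℝ) ^ 2) ∂μ) ≤ ENNReal.ofReal (C * n))
    (n i : ℕ) (hin : i < n) (M : ℕ) :
    μ {ω | ((M : ℝ) + 1) ^ 2 ≤ ((birkS T φ i ω : ℝ)) ^ 2}
      ≤ ENNReal.ofReal (C * n / ((M : ℝ) + 1) ^ 2) := by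
  have hMpos : (0 : ℝ) < ((M : ℝ) + 1) ^ 2 := by positivity
  rcases Nat.eq_zero_or_pos i with hi0 | hi1
  · subst hi0
    have : {ω : Ω | ((M : ℝ) + 1) ^ 2 ≤ ((birkS T φ 0 ω : ℝ)) ^ 2} = ∅ := by
      ext ω
      simp only [Set.mem_setOf_eq, Set.mem_empty_iff_false, iff_false, not_le, birkS_zero]
      norm_num
      exact hMpos
    rw [this]
    simp
  · have hmeas : AEMeasurable (fun ω => ENNReal.ofReal ((birkS T φ i ω : ℝ) ^ 2)) μ := by
      refine Measurable.aemeasurable ?_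
      exact (((measurable_from_top.comp (birkS_meas T φ hT hφ i))).pow_const 2).ennreal_ofReal
    have hsub : {ω : Ω | ((M : ℝ) + 1) ^ 2 ≤ ((birkS T φ i ω : ℝ)) ^ 2}
        = {ω : Ω | ENNReal.ofReal (((M : ℝ) + 1) ^ 2) ≤ ENNReal.ofReal ((birkS T φ i ω : ℝ) ^ 2)} := by
      ext ω
      simp [ENNReal.ofReal_le_ofReal_iff (sq_nonneg _)]
    calc μ {ω | ((M : ℝ) + 1) ^ 2 ≤ ((birkS T φ i ω : ℝ)) ^ 2}
        ≤ (∫⁻ ω, ENNReal.ofReal ((birkS T φ i ω : ℝ) ^ 2) ∂μ)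
            / ENNReal.ofReal (((M : ℝ) + 1) ^ 2) := by
          rw [hsub]
          exact meas_ge_le_lintegral_div hmeas (ENNReal.ofReal_pos.2 hMpos).ne' ENNReal.ofReal_ne_top
      _ ≤ ENNReal.ofReal (C * n) / ENNReal.ofReal (((M : ℝ) + 1) ^ 2) := by
          refine ENNReal.div_le_div_right ?_ _
          refine le_trans (hiii i hi1) (ENNReal.ofReal_le_ofReal ?_)
          have : (i:ℝ) ≤ (n:ℝ) := by exact_mod_cast hin.le
          nlinarith
      _ = ENNReal.ofReal (C * n / ((M : ℝ) + 1) ^ 2) := (ENNReal.ofReal_div_of_pos hMpos).symm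

lemma ofReal_locN_rep (n : ℕ) (z : ℤ) (ω : Ω) :
    ENNReal.ofReal ((locN T φ n z ω : ℝ))
      = ∑ i ∈ Finset.range n, (if birkS T φ i ω = z then (1 : ℝ≥0∞) else 0) := by
  have h1 : ((locN T φ n z ω : ℝ))
      = ∑ i ∈ Finset.range n, (if birkS T φ i ω = z then (1 : ℝ) else 0) := by
    simp [locN, apply_ite (Nat.cast : ℕ → ℝ)]
  rw [h1, ENNReal.ofReal_sum_of_nonneg (fun i _ => by positivity)]
  simp [apply_ite ENNReal.ofReal]

lemma tail_pointwise (n : ℕ) (l : ℤ) (K : ℕ) (ω : Ω) :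
    ∑' x : ℤ, (if x ∈ Finset.Icc (-(K : ℤ)) (K : ℤ) then 0
        else ENNReal.ofReal (((locN T φ n x ω : ℝ) - (locN T φ n (x + l) ω : ℝ)) ^ 2))
      ≤ ENNReal.ofReal (2 * (n : ℝ)) * ∑ i ∈ Finset.range n,
          ((if birkS T φ i ω ∈ Finset.Icc (-(K : ℤ)) (K : ℤ) then 0 else 1)
            + (if birkS T φ i ω - l ∈ Finset.Icc (-(K : ℤ)) (K : ℤ) then 0 else 1)) := by
  set s : Finset ℤ := Finset.Icc (-(K : ℤ)) (K : ℤ) with hs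
  set c : ℝ≥0∞ := ENNReal.ofReal (2 * (n : ℝ)) with hc
  have hstep : ∀ x : ℤ, (if x ∈ s then 0
        else ENNReal.ofReal (((locN T φ n x ω : ℝ) - (locN T φ n (x + l) ω : ℝ)) ^ 2))
      ≤ c * ((if x ∈ s then 0 else ENNReal.ofReal ((locN T φ n x ω : ℝ)))
          + (if x ∈ s then 0 else ENNReal.ofReal ((locN T φ n (x + l) ω : ℝ)))) := by
    intro x
    by_cases hx : x ∈ s
    · simp [hx]
    · simp only [if_neg hx]
      have ha1 : (0 : ℝ) ≤ (locN T φ n x ω : ℝ) := by positivity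
      have ha2 : (locN T φ n x ω : ℝ) ≤ n := by exact_mod_cast locN_le T φ n x ω
      have hb1 : (0 : ℝ) ≤ (locN T φ n (x + l) ω : ℝ) := by positivity
      have hb2 : (locN T φ n (x + l) ω : ℝ) ≤ n := by exact_mod_cast locN_le T φ n (x + l) ω
      have key : ((locN T φ n x ω : ℝ) - (locN T φ n (x + l) ω : ℝ)) ^ 2
          ≤ 2 * (n : ℝ) * ((locN T φ n x ω : ℝ) + (locN T φ n (x + l) ω : ℝ)) := by
        nlinarith
      calc ENNReal.ofReal (((locN T φ n x ω : ℝ) - (locN T φ n (x + l) ω : ℝ)) ^ 2)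
          ≤ ENNReal.ofReal (2 * (n : ℝ) * ((locN T φ n x ω : ℝ) + (locN T φ n (x + l) ω : ℝ))) :=
            ENNReal.ofReal_le_ofReal key
        _ = c * (ENNReal.ofReal ((locN T φ n x ω : ℝ))
              + ENNReal.ofReal ((locN T φ n (x + l) ω : ℝ))) := by
            rw [ENNReal.ofReal_mul (by positivity), ENNReal.ofReal_add ha1 hb1]
  refine le_trans (ENNReal.tsum_le_tsum hstep) ?_
  rw [ENNReal.tsum_mul_left]
  refine mul_le_mul_right ?_ c
  rw [ENNReal.tsum_add]
  have hu : (∑' x : ℤ, (if x ∈ s then 0 else ENNReal.ofReal ((locN T φ n x ω : ℝ))))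
      = ∑ i ∈ Finset.range n, (if birkS T φ i ω ∈ s then (0:ℝ≥0∞) else 1) := by
    have hrep : ∀ x : ℤ, (if x ∈ s then 0 else ENNReal.ofReal ((locN T φ n x ω : ℝ)))
        = ∑ i ∈ Finset.range n,
            (if x ∈ s then 0 else if birkS T φ i ω = x then (1 : ℝ≥0∞) else 0) := by
      intro x
      by_cases hx : x ∈ s
      · simp [hx]
      · simp only [if_neg hx]; exact ofReal_locN_rep T φ n x ω
    simp_rw [hrep]
    rw [Summable.tsum_finsetSum (fun i _ => ENNReal.summable)]
    refine Finset.sum_congr rfl fun i _ => ?_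
    rw [tsum_eq_single (birkS T φ i ω) ?_]
    · by_cases h : birkS T φ i ω ∈ s <;> simp [h]
    · intro x hx
      by_cases h : x ∈ s
      · simp [h]
      · rw [if_neg h, if_neg (fun he => hx he.symm)]
  have hv : (∑' x : ℤ, (if x ∈ s then 0 else ENNReal.ofReal ((locN T φ n (x + l) ω : ℝ))))
      = ∑ i ∈ Finset.range n, (if birkS T φ i ω - l ∈ s then (0:ℝ≥0∞) else 1) := by
    have hrep : ∀ x : ℤ, (if x ∈ s then 0 else ENNReal.ofReal ((locN T φ n (x + l) ω : ℝ)))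
        = ∑ i ∈ Finset.range n,
            (if x ∈ s then 0 else if birkS T φ i ω = x + l then (1 : ℝ≥0∞) else 0) := by
      intro x
      by_cases hx : x ∈ s
      · simp [hx]
      · simp only [if_neg hx]; exact ofReal_locN_rep T φ n (x + l) ω
    simp_rw [hrep]
    rw [Summable.tsum_finsetSum (fun i _ => ENNReal.summable)]
    refine Finset.sum_congr rfl fun i _ => ?_
    rw [tsum_eq_single (birkS T φ i ω - l) ?_]
    · by_cases h : birkS T φ i ω - l ∈ s <;> simp [h]
    · intro x hx
      by_cases h : x ∈ s
      · simp [h]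
      · have : birkS T φ i ω ≠ x + l := fun he => hx (by omega)
        simp [h, this]
  rw [hu, hv, ← Finset.sum_add_distrib]

lemma head_bound (μ : Measure Ω) (C : ℝ)
    (hi : ∀ n : ℕ, 1 ≤ n → ∀ x y : ℤ,
      (∫⁻ ω, ENNReal.ofReal (((locN T φ n x ω : ℝ) - (locN T φ n y ω : ℝ)) ^ 2) ∂μ)
        ≤ ENNReal.ofReal (C * (n : ℝ) ^ ((1 : ℝ) / 2) * |(x : ℝ) - (y : ℝ)|))
    (n : ℕ) (hn : 1 ≤ n) (l : ℤ) (K : ℕ) :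
    ∑' x : ℤ, (if x ∈ Finset.Icc (-(K : ℤ)) (K : ℤ) then
        (∫⁻ ω, ENNReal.ofReal (((locN T φ n x ω : ℝ) - (locN T φ n (x + l) ω : ℝ)) ^ 2) ∂μ)
      else 0)
      ≤ ENNReal.ofReal (((2 * K + 1 : ℕ) : ℝ) * (C * (n : ℝ) ^ ((1 : ℝ) / 2) * |(l : ℝ)|)) := by
  set s : Finset ℤ := Finset.Icc (-(K : ℤ)) (K : ℤ) with hs
  rw [tsum_eq_sum (s := s) (fun b hb => if_neg hb)]
  have hcard : s.card = 2 * K + 1 := by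
    rw [hs, Int.card_Icc]
    omega
  calc ∑ x ∈ s, (if x ∈ s then
        (∫⁻ ω, ENNReal.ofReal (((locN T φ n x ω : ℝ) - (locN T φ n (x + l) ω : ℝ)) ^ 2) ∂μ)
      else 0)
      ≤ ∑ _x ∈ s, ENNReal.ofReal (C * (n : ℝ) ^ ((1 : ℝ) / 2) * |(l : ℝ)|) := by
        refine Finset.sum_le_sum fun x hx => ?_
        rw [if_pos hx]
        refine le_trans (hi n hn x (x + l)) (le_of_eq ?_)
        congr 1
        have h1 : ((x : ℝ) - ((x + l : ℤ) : ℝ)) = -(l : ℝ) := by push_cast; ring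
        rw [h1, abs_neg]
    _ = ENNReal.ofReal (((2 * K + 1 : ℕ) : ℝ) * (C * (n : ℝ) ^ ((1 : ℝ) / 2) * |(l : ℝ)|)) := by
        rw [Finset.sum_const, hcard, nsmul_eq_mul, ← ENNReal.ofReal_natCast,
          ← ENNReal.ofReal_mul (by positivity)]

lemma tail_bound (μ : Measure Ω) [IsProbabilityMeasure μ]
    (hT : Measurable T) (hφ : Measurable φ) (C : ℝ) (hC : 0 < C)
    (hiii : ∀ n : ℕ, 1 ≤ n →
      (∫⁻ ω, ENNReal.ofReal ((birkS T φ n ω : ℝ) ^ 2) ∂μ) ≤ ENNReal.ofReal (C * n))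
    (n : ℕ) (hn : 1 ≤ n) (l : ℤ) (K : ℕ) (hK : l.natAbs ≤ K) :
    ∑' x : ℤ, (if x ∈ Finset.Icc (-(K : ℤ)) (K : ℤ) then 0 else
        (∫⁻ ω, ENNReal.ofReal (((locN T φ n x ω : ℝ) - (locN T φ n (x + l) ω : ℝ)) ^ 2) ∂μ))
      ≤ ENNReal.ofReal (4 * C * (n : ℝ) ^ 3 / (((K - l.natAbs : ℕ) : ℝ) + 1) ^ 2) := by
  set s : Finset ℤ := Finset.Icc (-(K : ℤ)) (K : ℤ) with hs
  set M : ℕ := K - l.natAbs with hM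
  set B : ℝ≥0∞ := ENNReal.ofReal (C * n / ((M : ℝ) + 1) ^ 2) with hB
  have hMK : (M : ℤ) = (K : ℤ) - l.natAbs := by
    rw [hM]; omega
  -- rewrite each term as an integral
  have hterm : ∀ x : ℤ, (if x ∈ s then 0 else
      (∫⁻ ω, ENNReal.ofReal (((locN T φ n x ω : ℝ) - (locN T φ n (x + l) ω : ℝ)) ^ 2) ∂μ))
      = ∫⁻ ω, (if x ∈ s then 0 else
          ENNReal.ofReal (((locN T φ n x ω : ℝ) - (locN T φ n (x + l) ω : ℝ)) ^ 2)) ∂μ := by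
    intro x
    by_cases hx : x ∈ s <;> simp [hx]
  simp_rw [hterm]
  rw [← lintegral_tsum fun x => by
    by_cases hx : x ∈ s
    · simp only [hx, if_true]; exact aemeasurable_const
    · simp only [hx, if_false]; exact (sq_meas T φ hT hφ n l x).aemeasurable]
  refine le_trans (lintegral_mono fun ω => tail_pointwise T φ n l K ω) ?_
  rw [lintegral_const_mul' _ _ ENNReal.ofReal_ne_top]
  have hmA : ∀ i : ℕ, Measurable fun ω => (if birkS T φ i ω ∈ s then (0:ℝ≥0∞) else 1) := by
    intro i
    refine Measurable.ite ?_ measurable_const measurable_const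
    exact (birkS_meas T φ hT hφ i) (by trivial)
  have hmB : ∀ i : ℕ, Measurable fun ω => (if birkS T φ i ω - l ∈ s then (0:ℝ≥0∞) else 1) := by
    intro i
    refine Measurable.ite ?_ measurable_const measurable_const
    exact ((birkS_meas T φ hT hφ i).sub measurable_const) (by trivial)
  rw [lintegral_finset_sum _ fun i _ => by exact (hmA i).add (hmB i)]
  have habs_sq : ∀ z : ℤ, (M : ℤ) + 1 ≤ |z| → ((M : ℝ) + 1) ^ 2 ≤ ((z : ℝ)) ^ 2 := by
    intro z hz
    have hr : ((M : ℝ) + 1) ≤ |(z : ℝ)| := by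
      rw [← Int.cast_abs]
      exact_mod_cast hz
    calc ((M : ℝ) + 1) ^ 2 ≤ |(z : ℝ)| ^ 2 := pow_le_pow_left₀ (by positivity) hr 2
      _ = ((z : ℝ)) ^ 2 := sq_abs _
  have hMlK : (M : ℤ) ≤ (K : ℤ) := by omega
  have hlK : (l.natAbs : ℤ) ≤ (K : ℤ) := by exact_mod_cast hK
  have hint1 : ∀ i : ℕ, i < n →
      (∫⁻ ω, (if birkS T φ i ω ∈ s then (0:ℝ≥0∞) else 1) ∂μ) ≤ B := by
    intro i hin
    have hind : (fun ω => (if birkS T φ i ω ∈ s then (0:ℝ≥0∞) else 1))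
        = Set.indicator (birkS T φ i ⁻¹' {z : ℤ | z ∉ s}) (fun _ => 1) := by
      funext ω
      by_cases h : birkS T φ i ω ∈ s <;> simp [h, Set.indicator]
    rw [hind, lintegral_indicator ((birkS_meas T φ hT hφ i) (by trivial)), setLIntegral_one]
    refine le_trans (measure_mono ?_) (cheb T φ μ hT hφ C hC hiii n i hin M)
    intro ω hω
    simp only [Set.mem_preimage, Set.mem_setOf_eq] at hω ⊢
    refine habs_sq _ ?_
    rw [hs, Finset.mem_Icc, not_and_or] at hω
    have h1 := le_abs_self (birkS T φ i ω)
    have h2 := neg_le_abs (birkS T φ i ω)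
    rcases hω with h | h <;> push_neg at h <;> linarith
  have hint2 : ∀ i : ℕ, i < n →
      (∫⁻ ω, (if birkS T φ i ω - l ∈ s then (0:ℝ≥0∞) else 1) ∂μ) ≤ B := by
    intro i hin
    have hind : (fun ω => (if birkS T φ i ω - l ∈ s then (0:ℝ≥0∞) else 1))
        = Set.indicator ((fun ω => birkS T φ i ω - l) ⁻¹' {z : ℤ | z ∉ s}) (fun _ => 1) := by
      funext ω
      by_cases h : birkS T φ i ω - l ∈ s <;> simp [h, Set.indicator]
    rw [hind, lintegral_indicator
      (by exact ((birkS_meas T φ hT hφ i).sub measurable_const) (by trivial)), setLIntegral_one]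
    refine le_trans (measure_mono ?_) (cheb T φ μ hT hφ C hC hiii n i hin M)
    intro ω hω
    simp only [Set.mem_preimage, Set.mem_setOf_eq] at hω ⊢
    refine habs_sq _ ?_
    rw [hs, Finset.mem_Icc, not_and_or] at hω
    have h1 := le_abs_self (birkS T φ i ω - l)
    have h2 := neg_le_abs (birkS T φ i ω - l)
    have htri : |birkS T φ i ω - l| ≤ |birkS T φ i ω| + |l| := abs_sub _ _
    have hl : |l| = (l.natAbs : ℤ) := Int.abs_eq_natAbs l
    rw [hMK]
    rcases hω with h | h <;> push_neg at h <;> linarith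
  calc ENNReal.ofReal (2 * (n : ℝ)) * ∑ i ∈ Finset.range n,
        (∫⁻ ω, ((if birkS T φ i ω ∈ s then (0:ℝ≥0∞) else 1)
          + (if birkS T φ i ω - l ∈ s then (0:ℝ≥0∞) else 1)) ∂μ)
      ≤ ENNReal.ofReal (2 * (n : ℝ)) * ∑ _i ∈ Finset.range n, (B + B) := by
        refine mul_le_mul_right (Finset.sum_le_sum fun i hi => ?_) _
        rw [lintegral_add_left (hmA i)]
        exact add_le_add (hint1 i (Finset.mem_range.1 hi)) (hint2 i (Finset.mem_range.1 hi))
    _ = ENNReal.ofReal (4 * C * (n : ℝ) ^ 3 / (((K - l.natAbs : ℕ) : ℝ) + 1) ^ 2) := by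
        rw [Finset.sum_const, Finset.card_range, nsmul_eq_mul, hB,
          ← ENNReal.ofReal_natCast n,
          ← ENNReal.ofReal_add (by positivity) (by positivity),
          ← ENNReal.ofReal_mul (by positivity),
          ← ENNReal.ofReal_mul (by positivity)]
        congr 1
        have hMpos : (0:ℝ) < ((M:ℝ)+1)^2 := by positivity
        rw [hM]
        field_simp
        ring

lemma main_bound (μ : Measure Ω) [IsProbabilityMeasure μ]
    (hT : Measurable T) (hφ : Measurable φ) (C : ℝ) (hC : 0 < C)
    (hi : ∀ n : ℕ, 1 ≤ n → ∀ x y : ℤ,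
      (∫⁻ ω, ENNReal.ofReal (((locN T φ n x ω : ℝ) - (locN T φ n y ω : ℝ)) ^ 2) ∂μ)
        ≤ ENNReal.ofReal (C * (n : ℝ) ^ ((1 : ℝ) / 2) * |(x : ℝ) - (y : ℝ)|))
    (hiii : ∀ n : ℕ, 1 ≤ n →
      (∫⁻ ω, ENNReal.ofReal ((birkS T φ n ω : ℝ) ^ 2) ∂μ) ≤ ENNReal.ofReal (C * n))
    (n : ℕ) (hn : 1 ≤ n) (l : ℤ) (K : ℕ) (hK : l.natAbs ≤ K) :
    (∫⁻ ω, ENNReal.ofReal |∑' x : ℤ, ((locN T φ n x ω : ℝ) ^ 2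
        - (locN T φ n x ω : ℝ) * (locN T φ n (x + l) ω : ℝ))| ∂μ)
      ≤ ENNReal.ofReal ((((2 * K + 1 : ℕ) : ℝ) * (C * (n : ℝ) ^ ((1 : ℝ) / 2) * |(l : ℝ)|)
          + 4 * C * (n : ℝ) ^ 3 / (((K - l.natAbs : ℕ) : ℝ) + 1) ^ 2) / 2) := by
  rw [lint_eq T φ μ hT hφ n l]
  have hsplit : ∀ x : ℤ,
      (∫⁻ ω, ENNReal.ofReal (((locN T φ n x ω : ℝ) - (locN T φ n (x + l) ω : ℝ)) ^ 2) ∂μ)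
      = (if x ∈ Finset.Icc (-(K : ℤ)) (K : ℤ) then
          (∫⁻ ω, ENNReal.ofReal (((locN T φ n x ω : ℝ) - (locN T φ n (x + l) ω : ℝ)) ^ 2) ∂μ)
        else 0)
        + (if x ∈ Finset.Icc (-(K : ℤ)) (K : ℤ) then 0 else
          (∫⁻ ω, ENNReal.ofReal (((locN T φ n x ω : ℝ) - (locN T φ n (x + l) ω : ℝ)) ^ 2) ∂μ)) := by
    intro x
    by_cases hx : x ∈ Finset.Icc (-(K : ℤ)) (K : ℤ) <;> simp [hx]
  have ha : (0:ℝ) ≤ ((2 * K + 1 : ℕ) : ℝ) * (C * (n : ℝ) ^ ((1 : ℝ) / 2) * |(l : ℝ)|) := by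
    have := Real.rpow_nonneg (Nat.cast_nonneg n) ((1:ℝ)/2)
    positivity
  have hb : (0:ℝ) ≤ 4 * C * (n : ℝ) ^ 3 / (((K - l.natAbs : ℕ) : ℝ) + 1) ^ 2 := by positivity
  calc ENNReal.ofReal (1 / 2) * ∑' x : ℤ,
        ∫⁻ ω, ENNReal.ofReal (((locN T φ n x ω : ℝ) - (locN T φ n (x + l) ω : ℝ)) ^ 2) ∂μ
      ≤ ENNReal.ofReal (1 / 2) *
        (ENNReal.ofReal (((2 * K + 1 : ℕ) : ℝ) * (C * (n : ℝ) ^ ((1 : ℝ) / 2) * |(l : ℝ)|))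
          + ENNReal.ofReal (4 * C * (n : ℝ) ^ 3 / (((K - l.natAbs : ℕ) : ℝ) + 1) ^ 2)) := by
        refine mul_le_mul_right ?_ _
        rw [tsum_congr hsplit, ENNReal.tsum_add]
        exact add_le_add (head_bound T φ μ C hi n hn l K)
          (tail_bound T φ μ hT hφ C hC hiii n hn l K hK)
    _ = ENNReal.ofReal ((((2 * K + 1 : ℕ) : ℝ) * (C * (n : ℝ) ^ ((1 : ℝ) / 2) * |(l : ℝ)|)
          + 4 * C * (n : ℝ) ^ 3 / (((K - l.natAbs : ℕ) : ℝ) + 1) ^ 2) / 2) := by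
        rw [← ENNReal.ofReal_add ha hb, ← ENNReal.ofReal_mul (by norm_num)]
        congr 1
        ring

end Helpers

/-- Assuming (i) `E_μ(|N_n(x) − N_n(y)|²) ≤ C n^{1/2} |x − y|`,
(ii) `μ(S_u = 0) ≤ C u^{-1/2}` and (iii) `E_μ(S_n²) ≤ C n`, for every `l ∈ ℤ`,
`E_μ(|∑_{x ∈ ℤ} (N_n(x)² − N_n(x) N_n(x+l))|) = o(n^{3/2})`. -/
theorem stmt11 {Ω : Type*} [MeasurableSpace Ω] (μ : Measure Ω) [IsProbabilityMeasure μ]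
    (T : Ω → Ω) (hT : MeasurePreserving T μ μ)
    (φ : Ω → ℤ) (hφ : Measurable φ)
    (C : ℝ) (hC : 0 < C)
    (hi : ∀ n : ℕ, 1 ≤ n → ∀ x y : ℤ,
      (∫⁻ ω, ENNReal.ofReal (((locN T φ n x ω : ℝ) - (locN T φ n y ω : ℝ)) ^ 2) ∂μ)
        ≤ ENNReal.ofReal (C * (n : ℝ) ^ ((1 : ℝ) / 2) * |(x : ℝ) - (y : ℝ)|))
    (hii : ∀ u : ℕ, 1 ≤ u →
      μ {ω : Ω | birkS T φ u ω = 0} ≤ ENNReal.ofReal (C * (u : ℝ) ^ (-(1 : ℝ) / 2)))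
    (hiii : ∀ n : ℕ, 1 ≤ n →
      (∫⁻ ω, ENNReal.ofReal ((birkS T φ n ω : ℝ) ^ 2) ∂μ) ≤ ENNReal.ofReal (C * n)) :
    ∀ l : ℤ, Tendsto (fun n : ℕ =>
        (∫⁻ ω, ENNReal.ofReal
            |∑' x : ℤ, ((locN T φ n x ω : ℝ) ^ 2
              - (locN T φ n x ω : ℝ) * (locN T φ n (x + l) ω : ℝ))| ∂μ)
          / ENNReal.ofReal ((n : ℝ) ^ ((3 : ℝ) / 2)))
      atTop (nhds 0) := by
  intro l
  rw [ENNReal.tendsto_nhds_zero]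
  intro ε hε
  obtain ⟨e, he0, hee⟩ : ∃ e : ℝ, 0 < e ∧ ENNReal.ofReal e ≤ ε := by
    rcases eq_or_ne ε ⊤ with h | h
    · exact ⟨1, one_pos, by simp [h]⟩
    · exact ⟨ε.toReal, ENNReal.toReal_pos hε.ne' h, by rw [ENNReal.ofReal_toReal h]⟩
  set al : ℝ := |(l : ℝ)| with hal
  have hal0 : (0 : ℝ) ≤ al := abs_nonneg _
  have halnat : ((l.natAbs : ℕ) : ℝ) = al := by rw [hal, Nat.cast_natAbs]; norm_cast
  set δ : ℝ := e / (2 * C * (al + 1)) with hδ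
  have hδ0 : 0 < δ := by positivity
  set K : ℕ → ℕ := fun n => ⌈δ * n⌉₊ + l.natAbs with hKdef
  have hKge : ∀ n, l.natAbs ≤ K n := fun n => Nat.le_add_left _ _
  have hMeq : ∀ n, K n - l.natAbs = ⌈δ * (n:ℝ)⌉₊ := fun n => by simp [hKdef]
  have hhalf : Tendsto (fun n : ℕ => (n : ℝ) ^ ((1 : ℝ) / 2)) atTop atTop :=
    (tendsto_rpow_atTop (by norm_num)).comp tendsto_natCast_atTop_atTop
  have E1 : ∀ᶠ n : ℕ in atTop, 1 ≤ n := eventually_ge_atTop 1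
  have E2 : ∀ᶠ n : ℕ in atTop, (2 * al + 3) * (C * al) ≤ e / 2 * (n : ℝ) :=
    (tendsto_natCast_atTop_atTop.const_mul_atTop (half_pos he0)).eventually_ge_atTop _
  have E3 : ∀ᶠ n : ℕ in atTop, 4 * C / δ ^ 2 ≤ e / 2 * (n : ℝ) ^ ((1 : ℝ) / 2) :=
    (hhalf.const_mul_atTop (half_pos he0)).eventually_ge_atTop _
  filter_upwards [E1, E2, E3] with n hn h2 h3
  have hnR : (1 : ℝ) ≤ (n : ℝ) := by exact_mod_cast hn
  have hnpos : (0 : ℝ) < n := by linarith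
  have h12pos : (0 : ℝ) < (n : ℝ) ^ ((1 : ℝ) / 2) := Real.rpow_pos_of_pos hnpos _
  have h32pos : (0 : ℝ) < (n : ℝ) ^ ((3 : ℝ) / 2) := Real.rpow_pos_of_pos hnpos _
  have h32 : (n : ℝ) ^ ((3 : ℝ) / 2) = (n : ℝ) * (n : ℝ) ^ ((1 : ℝ) / 2) := by
    rw [show (3 : ℝ) / 2 = 1 + 1 / 2 by norm_num, Real.rpow_add hnpos, Real.rpow_one]
  have hceil : (⌈δ * (n:ℝ)⌉₊ : ℝ) ≤ δ * n + 1 := (Nat.ceil_lt_add_one (by positivity)).le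
  have hceil2 : δ * n ≤ (⌈δ * (n:ℝ)⌉₊ : ℝ) + 1 := le_trans (Nat.le_ceil _) (by linarith)
  have hhead : ((2 * K n + 1 : ℕ) : ℝ) * (C * (n : ℝ) ^ ((1 : ℝ) / 2) * al)
      ≤ (e + e / 2) * (n : ℝ) ^ ((3 : ℝ) / 2) := by
    have hKcast : ((2 * K n + 1 : ℕ) : ℝ) ≤ 2 * δ * n + (2 * al + 3) := by
      have : ((2 * K n + 1 : ℕ) : ℝ) = 2 * (⌈δ * (n:ℝ)⌉₊ : ℝ) + 2 * ((l.natAbs : ℕ) : ℝ) + 1 := by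
        simp only [hKdef]; push_cast; ring
      rw [this, halnat]; linarith
    have hδe : 2 * δ * C * (al + 1) = e := by
      rw [hδ]; field_simp
    have hpart1 : 2 * δ * C * al ≤ e := by nlinarith
    calc ((2 * K n + 1 : ℕ) : ℝ) * (C * (n : ℝ) ^ ((1 : ℝ) / 2) * al)
        ≤ (2 * δ * n + (2 * al + 3)) * (C * (n : ℝ) ^ ((1 : ℝ) / 2) * al) :=
          mul_le_mul_of_nonneg_right hKcast (by positivity)
      _ = (2 * δ * C * al) * ((n : ℝ) * (n : ℝ) ^ ((1 : ℝ) / 2))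
          + ((2 * al + 3) * (C * al)) * (n : ℝ) ^ ((1 : ℝ) / 2) := by ring
      _ ≤ e * ((n : ℝ) * (n : ℝ) ^ ((1 : ℝ) / 2))
          + (e / 2 * (n : ℝ)) * (n : ℝ) ^ ((1 : ℝ) / 2) := by
          refine add_le_add (mul_le_mul_of_nonneg_right hpart1 (by positivity))
            (mul_le_mul_of_nonneg_right h2 (by positivity))
      _ = (e + e / 2) * (n : ℝ) ^ ((3 : ℝ) / 2) := by rw [h32]; ring
  have htail : 4 * C * (n : ℝ) ^ 3 / ((⌈δ * (n:ℝ)⌉₊ : ℝ) + 1) ^ 2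
      ≤ e / 2 * (n : ℝ) ^ ((3 : ℝ) / 2) := by
    have hd0 : (0 : ℝ) < δ * n := by positivity
    have step1 : 4 * C * (n : ℝ) ^ 3 / ((⌈δ * (n:ℝ)⌉₊ : ℝ) + 1) ^ 2
        ≤ 4 * C * (n : ℝ) ^ 3 / (δ * n) ^ 2 := by
      apply div_le_div_of_nonneg_left (by positivity) (by positivity)
      exact pow_le_pow_left₀ hd0.le hceil2 2
    have step2 : 4 * C * (n : ℝ) ^ 3 / (δ * n) ^ 2 = (4 * C / δ ^ 2) * n := by
      field_simp
    calc 4 * C * (n : ℝ) ^ 3 / ((⌈δ * (n:ℝ)⌉₊ : ℝ) + 1) ^ 2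
        ≤ (4 * C / δ ^ 2) * n := by rw [← step2]; exact step1
      _ ≤ (e / 2 * (n : ℝ) ^ ((1 : ℝ) / 2)) * n := mul_le_mul_of_nonneg_right h3 hnpos.le
      _ = e / 2 * (n : ℝ) ^ ((3 : ℝ) / 2) := by rw [h32]; ring
  have hBn : ((((2 * K n + 1 : ℕ) : ℝ) * (C * (n : ℝ) ^ ((1 : ℝ) / 2) * |(l : ℝ)|)
      + 4 * C * (n : ℝ) ^ 3 / (((K n - l.natAbs : ℕ) : ℝ) + 1) ^ 2) / 2)
      ≤ e * (n : ℝ) ^ ((3 : ℝ) / 2) := by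
    rw [hMeq n, ← hal]
    linarith
  rw [ENNReal.div_le_iff (ENNReal.ofReal_pos.2 h32pos).ne' ENNReal.ofReal_ne_top]
  calc (∫⁻ ω, ENNReal.ofReal |∑' x : ℤ, ((locN T φ n x ω : ℝ) ^ 2
        - (locN T φ n x ω : ℝ) * (locN T φ n (x + l) ω : ℝ))| ∂μ)
      ≤ ENNReal.ofReal ((((2 * K n + 1 : ℕ) : ℝ) * (C * (n : ℝ) ^ ((1 : ℝ) / 2) * |(l : ℝ)|)
          + 4 * C * (n : ℝ) ^ 3 / (((K n - l.natAbs : ℕ) : ℝ) + 1) ^ 2) / 2) :=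
        main_bound T φ μ hT.measurable hφ C hC hi hiii n hn l (K n) (hKge n)
    _ ≤ ENNReal.ofReal (e * (n : ℝ) ^ ((3 : ℝ) / 2)) := ENNReal.ofReal_le_ofReal hBn
    _ = ENNReal.ofReal e * ENNReal.ofReal ((n : ℝ) ^ ((3 : ℝ) / 2)) :=
        ENNReal.ofReal_mul he0.le
    _ ≤ ε * ENNReal.ofReal ((n : ℝ) ^ ((3 : ℝ) / 2)) := mul_le_mul_left hee _
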